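/- Let p be a prime number and let G_p := ∏_{m=1}^∞ (1 − X^{pm})^p · (∏_{m=1}^∞ (1 − X^m))⁻¹ ∈ ℤ⟦X⟧. Then for every integer d with 0 ≤ d < p, the coefficient of X^d in G_p equals the number of partitions of d; in particular it is strictly positive. Consequently, for a prime p ≥ 11 the coefficients c(n) of η(pτ)^p/η(τ) satisfy c(n) = 0 for 1 ≤ n < (p²−1)/24 and c(n) ≠ 0 for (p²−1)/24 ≤ n < (p²−1)/24 + p. -/

import Mathlib

open PowerSeries

/-- The product topology (X-adic topology) on `ℤ⟦X⟧`. -/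
noncomputable instance : TopologicalSpace (PowerSeries ℤ) :=
  inferInstanceAs (TopologicalSpace ((Unit →₀ ℕ) → ℤ))

/-- `G_p = ∏_{m=1}^∞ (1 − X^{pm})^p · (∏_{m=1}^∞ (1 − X^m))⁻¹ ∈ ℤ⟦X⟧`. -/
noncomputable def G (p : ℕ) : PowerSeries ℤ :=
  (∏' m : ℕ+, (1 - (X : PowerSeries ℤ) ^ (p * (m : ℕ))) ^ p) *
    Ring.inverse (∏' m : ℕ+, (1 - (X : PowerSeries ℤ) ^ (m : ℕ)))

/-- `c p n`, the coefficient of `X^n` in the q-expansion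
`X^{(p²−1)/24} · G_p` of the eta-product `η(pτ)^p/η(τ)`. -/
noncomputable def c (p n : ℕ) : ℤ :=
  PowerSeries.coeff n ((X : PowerSeries ℤ) ^ ((p ^ 2 - 1) / 24) * G p)

namespace EtaAux

noncomputable section

open Finset
open scoped Classical

/-- divisibility of a product minus one. -/
theorem dvd_prod_sub_one {ι : Type*} {s : Finset ι} {f : ι → PowerSeries ℤ}
    {g : PowerSeries ℤ} (h : ∀ i ∈ s, g ∣ f i - 1) : g ∣ (∏ i ∈ s, f i) - 1 := by
  classical
  induction s using Finset.cons_induction with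
  | empty => simp
  | cons a s ha ih =>
    rw [Finset.prod_cons]
    have h1 : g ∣ f a - 1 := h a (Finset.mem_cons_self a s)
    have h2 : g ∣ (∏ i ∈ s, f i) - 1 := ih fun i hi => h i (Finset.mem_cons_of_mem hi)
    have : f a * ∏ i ∈ s, f i - 1 = f a * ((∏ i ∈ s, f i) - 1) + (f a - 1) := by ring
    rw [this]
    exact dvd_add (Dvd.dvd.mul_left h2 _) h1

theorem dvd_pow_sub_one {g a : PowerSeries ℤ} (h : g ∣ a - 1) (k : ℕ) :
    g ∣ a ^ k - 1 := by
  have := sub_dvd_pow_sub_pow a 1 k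
  rw [one_pow] at this
  exact h.trans this

/-- coefficients below `n+1` of a product only depend on factors congruent to 1 mod X^(n+1). -/
theorem coeff_prod_subset {ι : Type*} [DecidableEq ι] {s t : Finset ι} (hst : s ⊆ t)
    {f : ι → PowerSeries ℤ} {n : ℕ}
    (h : ∀ m ∈ t, m ∉ s → (X : PowerSeries ℤ) ^ (n + 1) ∣ f m - 1) {k : ℕ} (hk : k ≤ n) :
    coeff k (∏ i ∈ t, f i) = coeff k (∏ i ∈ s, f i) := by
  have hd : (X : PowerSeries ℤ) ^ (n + 1) ∣ (∏ i ∈ t \ s, f i) - 1 :=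
    dvd_prod_sub_one fun i hi => by
      rw [Finset.mem_sdiff] at hi
      exact h i hi.1 hi.2
  have := Finset.prod_sdiff (f := f) hst
  rw [← this]
  have key : (∏ i ∈ t \ s, f i) * ∏ i ∈ s, f i - ∏ i ∈ s, f i =
      ((∏ i ∈ t \ s, f i) - 1) * ∏ i ∈ s, f i := by ring
  have h0 : coeff k ((∏ i ∈ t \ s, f i) * ∏ i ∈ s, f i - ∏ i ∈ s, f i) = 0 := by
    rw [key]
    have : (X : PowerSeries ℤ) ^ (n + 1) ∣ ((∏ i ∈ t \ s, f i) - 1) * ∏ i ∈ s, f i :=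
      hd.mul_right _
    exact X_pow_dvd_iff.1 this k (by omega)
  have := (map_sub (coeff k) ((∏ i ∈ t \ s, f i) * ∏ i ∈ s, f i) (∏ i ∈ s, f i))
  rw [this] at h0
  linarith

/-- The natural limit candidate for an infinite product. -/
noncomputable def L (f : ℕ+ → PowerSeries ℤ) : PowerSeries ℤ :=
  PowerSeries.mk fun n => coeff n (∏ m ∈ Finset.Iic (⟨n + 1, n.succ_pos⟩ : ℕ+), f m)

theorem hasProd_aux (f : ℕ+ → PowerSeries ℤ)
    (hf : ∀ m : ℕ+, (X : PowerSeries ℤ) ^ (m : ℕ) ∣ f m - 1) : HasProd f (L f) := by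
  rw [HasProd]
  apply tendsto_pi_nhds.mpr
  intro d
  have hdd : d = Finsupp.single () (d ()) := Finsupp.unique_single d
  set n := d ()
  have hcoeff : ∀ g : PowerSeries ℤ, g d = coeff n g := by
    intro g; rw [hdd]; rfl
  simp only [hcoeff]
  rw [nhds_discrete, Filter.tendsto_pure]
  filter_upwards [Filter.eventually_ge_atTop (Finset.Iic (⟨n + 1, n.succ_pos⟩ : ℕ+))] with s hs
  have : coeff n (L f) = coeff n (∏ m ∈ Finset.Iic (⟨n + 1, n.succ_pos⟩ : ℕ+), f m) :=
    coeff_mk _ _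
  rw [this]
  refine coeff_prod_subset hs ?_ le_rfl
  intro m _ hm
  have h1 : n + 1 ≤ (m : ℕ) := by
    by_contra hcon
    push_neg at hcon
    exact hm (Finset.mem_Iic.mpr
      ((PNat.coe_le_coe _ _).mp (show (m : ℕ) ≤ (((⟨n + 1, n.succ_pos⟩ : ℕ+)) : ℕ) by
        show (m : ℕ) ≤ n + 1; omega)))
  exact (pow_dvd_pow (X : PowerSeries ℤ) h1).trans (hf m)

theorem coeff_tprod (f : ℕ+ → PowerSeries ℤ)
    (hf : ∀ m : ℕ+, (X : PowerSeries ℤ) ^ (m : ℕ) ∣ f m - 1) (n : ℕ) :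
    coeff n (∏' m, f m) =
      coeff n (∏ m ∈ Finset.Iic (⟨n + 1, n.succ_pos⟩ : ℕ+), f m) := by
  haveI : T2Space (PowerSeries ℤ) := inferInstanceAs (T2Space ((Unit →₀ ℕ) → ℤ))
  rw [(hasProd_aux f hf).tprod_eq]
  exact coeff_mk _ _

theorem Iic_pnat_eq (k : ℕ) (hk : 0 < k) :
    Finset.Iic (⟨k, hk⟩ : ℕ+) = (range k).map
      (⟨fun a => (⟨a + 1, a.succ_pos⟩ : {n : ℕ // 0 < n}), fun a b h => by simpa using h⟩ :
        ℕ ↪ {n : ℕ // 0 < n}) := by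
  ext m
  simp only [Finset.mem_Iic, Finset.mem_map, Finset.mem_range, Function.Embedding.coeFn_mk]
  constructor
  · intro h
    have h' : (m : ℕ) ≤ k := h
    have hm : 0 < (m : ℕ) := m.2
    refine ⟨(m : ℕ) - 1, by omega, ?_⟩
    apply Subtype.ext
    show (m : ℕ) - 1 + 1 = (m : ℕ)
    omega
  · rintro ⟨a, ha, rfl⟩
    show a + 1 ≤ k
    omega

theorem coeff_tprod_range (h : ℕ → PowerSeries ℤ)
    (hf : ∀ i : ℕ, (X : PowerSeries ℤ) ^ (i + 1) ∣ h i - 1) (n : ℕ) :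
    coeff n (∏' m : ℕ+, h ((m : ℕ) - 1)) =
      coeff n (∏ i ∈ range (n + 1), h i) := by
  have hf' : ∀ m : ℕ+, (X : PowerSeries ℤ) ^ (m : ℕ) ∣ h ((m : ℕ) - 1) - 1 := by
    intro m
    have hm : 0 < (m : ℕ) := m.2
    have he : (m : ℕ) - 1 + 1 = (m : ℕ) := by omega
    rw [← he]
    exact hf _
  rw [coeff_tprod _ hf' n, Iic_pnat_eq (n + 1) n.succ_pos, Finset.prod_map]
  congr 1

open Finset.HasAntidiagonal

variable {α : Type*}

/-- A convenience constructor for the power series whose coefficients indicate a subset. -/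
def indicatorSeries (α : Type*) [Semiring α] (s : Set ℕ) : PowerSeries α :=
  PowerSeries.mk fun n => if n ∈ s then 1 else 0

theorem coeff_indicator (s : Set ℕ) [Semiring α] (n : ℕ) :
    coeff n (indicatorSeries α s) = if n ∈ s then 1 else 0 :=
  coeff_mk _ _

theorem coeff_indicator_pos (s : Set ℕ) [Semiring α] (n : ℕ) (h : n ∈ s) :
    coeff n (indicatorSeries α s) = 1 := by rw [coeff_indicator, if_pos h]

theorem coeff_indicator_neg (s : Set ℕ) [Semiring α] (n : ℕ) (h : n ∉ s) :
    coeff n (indicatorSeries α s) = 0 := by rw [coeff_indicator, if_neg h]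

theorem constantCoeff_indicator (s : Set ℕ) [Semiring α] :
    constantCoeff (indicatorSeries α s) = if 0 ∈ s then 1 else 0 :=
  rfl

-- The main workhorse of the partition theorem proof.
theorem partialGF_prop (α : Type*) [CommSemiring α] (n : ℕ) (s : Finset ℕ) (hs : ∀ i ∈ s, 0 < i)
    (c : ℕ → Set ℕ) (hc : ∀ i, i ∉ s → 0 ∈ c i) :
    #{p : n.Partition | (∀ j, p.parts.count j ∈ c j) ∧ ∀ j ∈ p.parts, j ∈ s} =
      coeff n (∏ i ∈ s, indicatorSeries α ((· * i) '' c i)) := by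
  simp_rw [coeff_prod, coeff_indicator, prod_boole, sum_boole]
  apply congr_arg
  simp only [mem_univ, forall_true_left, not_and, not_forall, exists_prop,
    Set.mem_image, not_exists]
  set φ : (a : Nat.Partition n) →
    a ∈ filter (fun p ↦ (∀ (j : ℕ), Multiset.count j p.parts ∈ c j) ∧ ∀ j ∈ p.parts, j ∈ s) univ →
    ℕ →₀ ℕ := fun p _ => {
      toFun := fun i => Multiset.count i p.parts • i
      support := Finset.filter (fun i => i ≠ 0) p.parts.toFinset
      mem_support_toFun := fun a => by
        simp only [smul_eq_mul, ne_eq, mul_eq_zero, Multiset.count_eq_zero]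
        rw [not_or, not_not]
        simp only [Multiset.mem_toFinset, not_not, mem_filter] }
  refine Finset.card_bij φ ?_ ?_ ?_
  · intro a ha
    simp only [φ, not_forall, not_exists, not_and, exists_prop, mem_filter]
    rw [mem_finsuppAntidiag]
    dsimp only [ne_eq, smul_eq_mul, id_eq, eq_mpr_eq_cast, le_eq_subset, Finsupp.coe_mk]
    simp only [mem_univ, forall_true_left, not_and, not_forall, exists_prop,
      mem_filter, true_and] at ha
    refine ⟨⟨?_, fun i ↦ ?_⟩, fun i _ ↦ ⟨a.parts.count i, ha.1 i, rfl⟩⟩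
    · conv_rhs => simp [← a.parts_sum]
      rw [sum_multiset_count_of_subset _ s]
      · simp only [smul_eq_mul]
      · intro i
        simp only [Multiset.mem_toFinset, not_not, mem_filter]
        apply ha.2
    · simp only [ne_eq, Multiset.mem_toFinset, not_not, mem_filter, and_imp]
      exact fun hi _ ↦ ha.2 i hi
  · intro p₁ hp₁ p₂ hp₂ h
    apply Nat.Partition.ext
    simp only [true_and, mem_univ, mem_filter] at hp₁ hp₂
    ext i
    simp only [φ, ne_eq, Multiset.mem_toFinset, not_not, smul_eq_mul, Finsupp.mk.injEq] at h
    by_cases hi : i = 0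
    · rw [hi]
      rw [Multiset.count_eq_zero_of_notMem]
      · rw [Multiset.count_eq_zero_of_notMem]
        intro a; exact Nat.lt_irrefl 0 (hs 0 (hp₂.2 0 a))
      intro a; exact Nat.lt_irrefl 0 (hs 0 (hp₁.2 0 a))
    · rw [← mul_left_inj' hi]
      rw [funext_iff] at h
      exact h.2 i
  · simp only [φ, mem_filter, mem_finsuppAntidiag, mem_univ, exists_prop, true_and, and_assoc]
    rintro f ⟨hf, hf₃, hf₄⟩
    have hf' : f ∈ finsuppAntidiag s n := mem_finsuppAntidiag.mpr ⟨hf, hf₃⟩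
    simp only [mem_finsuppAntidiag] at hf'
    refine ⟨⟨∑ i ∈ s, Multiset.replicate (f i / i) i, ?_, ?_⟩, ?_, ?_, ?_⟩
    · intro i hi
      simp only [exists_prop, Multiset.mem_sum, mem_map, Function.Embedding.coeFn_mk] at hi
      rcases hi with ⟨t, ht, z⟩
      apply hs
      rwa [Multiset.eq_of_mem_replicate z]
    · simp_rw [Multiset.sum_sum, Multiset.sum_replicate, Nat.nsmul_eq_mul]
      rw [← hf'.1]
      refine sum_congr rfl fun i hi => Nat.div_mul_cancel ?_
      rcases hf₄ i hi with ⟨w, _, hw₂⟩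
      rw [← hw₂]
      exact dvd_mul_left _ _
    · intro i
      simp_rw [Multiset.count_sum', Multiset.count_replicate, sum_ite_eq']
      split_ifs with h
      · rcases hf₄ i h with ⟨w, hw₁, hw₂⟩
        rwa [← hw₂, Nat.mul_div_cancel _ (hs i h)]
      · exact hc _ h
    · intro i hi
      rw [Multiset.mem_sum] at hi
      rcases hi with ⟨j, hj₁, hj₂⟩
      rwa [Multiset.eq_of_mem_replicate hj₂]
    · ext i
      simp_rw [Multiset.count_sum', Multiset.count_replicate, sum_ite_eq']
      simp only [ne_eq, Multiset.mem_toFinset, not_not, smul_eq_mul, ite_mul,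
        zero_mul, Finsupp.coe_mk]
      split_ifs with h
      · apply Nat.div_mul_cancel
        rcases hf₄ i h with ⟨w, _, hw₂⟩
        apply Dvd.intro_left _ hw₂
      · apply symm
        rw [← Finsupp.notMem_support_iff]
        exact notMem_mono hf'.2 h


theorem indicator_mul_one_sub (i : ℕ) :
    indicatorSeries ℤ {k | (i + 1) ∣ k} * (1 - (X : PowerSeries ℤ) ^ (i + 1)) = 1 := by
  ext n
  rw [mul_sub, mul_one, map_sub, coeff_mul_X_pow', coeff_one, coeff_indicator]
  by_cases h0 : n = 0
  · subst h0
    simp [Set.mem_setOf_eq]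
  · rw [if_neg h0]
    by_cases hle : i + 1 ≤ n
    · rw [if_pos hle, coeff_indicator]
      by_cases hd : (i + 1) ∣ n
      · rw [if_pos (show n ∈ {k | (i + 1) ∣ k} from hd),
          if_pos (show n - (i + 1) ∈ {k | (i + 1) ∣ k} from Nat.dvd_sub hd dvd_rfl), sub_self]
      · rw [if_neg (show ¬ n ∈ {k | (i + 1) ∣ k} from hd), if_neg, sub_self]
        intro hc
        refine hd ?_
        have h := Nat.sub_add_cancel hle
        exact h ▸ Nat.dvd_add hc dvd_rfl
    · rw [if_neg hle, if_neg, sub_zero]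
      intro hd
      have hd : (i + 1) ∣ n := hd
      have : (i + 1) ≤ n := Nat.le_of_dvd (by omega) hd
      omega

/-- The number of partitions of `n` is the `n`-th coefficient of
`∏_{i<m} (1 / (1 - X^{i+1}))` whenever `n ≤ m`. -/
theorem coeff_partition_prod (n m : ℕ) (h : n ≤ m) :
    coeff n (∏ i ∈ range m, indicatorSeries ℤ {k | (i + 1) ∣ k}) =
      Fintype.card (Nat.Partition n) := by
  have hprop := partialGF_prop ℤ n ((range m).map ⟨Nat.succ, Nat.succ_injective⟩)
    (by
      intro i hi
      simp only [mem_map, mem_range, Function.Embedding.coeFn_mk] at hi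
      obtain ⟨a, -, rfl⟩ := hi
      exact Nat.succ_pos a)
    (fun _ => Set.univ) (fun _ _ => trivial)
  rw [Finset.prod_map] at hprop
  have hset : ∀ i : ℕ, ((· * (Function.Embedding.mk Nat.succ Nat.succ_injective) i) ''
      Set.univ) = {k | (i + 1) ∣ k} := by
    intro i
    ext k
    simp only [Set.image_univ, Set.mem_range, Set.mem_setOf_eq, Function.Embedding.coeFn_mk]
    constructor
    · rintro ⟨y, rfl⟩; exact Dvd.intro_left y rfl
    · rintro ⟨y, rfl⟩; exact ⟨y, mul_comm _ _⟩
  simp_rw [hset] at hprop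
  rw [← hprop]
  norm_cast
  rw [Finset.filter_true_of_mem, Finset.card_univ]
  intro p _
  refine ⟨fun _ => trivial, ?_⟩
  intro j hj
  have hj1 : 0 < j := p.parts_pos hj
  have hj2 : j ≤ n := by
    simpa [p.parts_sum] using Multiset.single_le_sum (fun _ _ => Nat.zero_le _) _ hj
  simp only [mem_map, mem_range, Function.Embedding.coeFn_mk]
  exact ⟨j - 1, by omega, by omega⟩

theorem prod_mul_eq_one (m : ℕ) :
    (∏ i ∈ range m, indicatorSeries ℤ {k | (i + 1) ∣ k}) *
      (∏ i ∈ range m, (1 - (X : PowerSeries ℤ) ^ (i + 1))) = 1 := by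
  rw [← Finset.prod_mul_distrib]
  rw [Finset.prod_congr rfl fun i _ => indicator_mul_one_sub i]
  exact Finset.prod_const_one

/-- The partition generating function. -/
noncomputable def P : PowerSeries ℤ :=
  PowerSeries.mk fun n => (Fintype.card (Nat.Partition n) : ℤ)

/-- coefficient-wise congruence for products. -/
theorem coeff_mul_congr {a a' b b' : PowerSeries ℤ} {n : ℕ}
    (ha : ∀ j ≤ n, coeff j a = coeff j a') (hb : ∀ j ≤ n, coeff j b = coeff j b') :
    coeff n (a * b) = coeff n (a' * b') := by
  rw [coeff_mul, coeff_mul]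
  refine Finset.sum_congr rfl fun x hx => ?_
  rw [Finset.HasAntidiagonal.mem_antidiagonal] at hx
  rw [ha x.1 (by omega), hb x.2 (by omega)]

theorem hb_dvd : ∀ m : ℕ+,
    (X : PowerSeries ℤ) ^ (m : ℕ) ∣ (1 - (X : PowerSeries ℤ) ^ (m : ℕ)) - 1 := by
  intro m
  have : (1 - (X : PowerSeries ℤ) ^ (m : ℕ)) - 1 = -(X ^ (m : ℕ)) := by ring
  rw [this]
  exact (dvd_refl _).neg_right

theorem coeff_B (n : ℕ) :
    coeff n (∏' m : ℕ+, (1 - (X : PowerSeries ℤ) ^ (m : ℕ))) =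
      coeff n (∏ i ∈ range (n + 1), (1 - (X : PowerSeries ℤ) ^ (i + 1))) := by
  have := coeff_tprod_range (fun i => 1 - (X : PowerSeries ℤ) ^ (i + 1))
    (fun i => by
      have : (1 - (X : PowerSeries ℤ) ^ (i + 1)) - 1 = -(X ^ (i + 1)) := by ring
      rw [this]; exact (dvd_refl _).neg_right) n
  rw [← this]
  congr 1
  apply tprod_congr
  intro m
  congr 1
  exact congrArg (fun k => (X : PowerSeries ℤ) ^ k) (Nat.sub_add_cancel m.2).symm

theorem P_mul_B :
    P * (∏' m : ℕ+, (1 - (X : PowerSeries ℤ) ^ (m : ℕ))) = 1 := by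
  ext n
  have h1 : coeff n (P * (∏' m : ℕ+, (1 - (X : PowerSeries ℤ) ^ (m : ℕ)))) =
      coeff n ((∏ i ∈ range (n + 1), indicatorSeries ℤ {k | (i + 1) ∣ k}) *
        (∏ i ∈ range (n + 1), (1 - (X : PowerSeries ℤ) ^ (i + 1)))) := by
    apply coeff_mul_congr
    · intro j hj
      rw [P, coeff_mk, coeff_partition_prod j (n + 1) (by omega)]
    · intro j hj
      rw [coeff_B j]
      refine (coeff_prod_subset (s := range (j + 1)) (t := range (n + 1))
        (by intro x hx; simp only [mem_range] at *; omega) ?_ (le_refl j)).symm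
      intro i hi hi2
      simp only [mem_range] at hi hi2
      have : (1 - (X : PowerSeries ℤ) ^ (i + 1)) - 1 = -(X ^ (i + 1)) := by ring
      rw [this]
      exact ((pow_dvd_pow (X : PowerSeries ℤ) (by omega))).neg_right
  rw [h1, prod_mul_eq_one]

theorem inverse_B_eq_P :
    Ring.inverse (∏' m : ℕ+, (1 - (X : PowerSeries ℤ) ^ (m : ℕ))) = P := by
  set B := ∏' m : ℕ+, (1 - (X : PowerSeries ℤ) ^ (m : ℕ))
  have hu : IsUnit B := IsUnit.of_mul_eq_one P (by rw [mul_comm]; exact P_mul_B)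
  have h2 : Ring.inverse B * B = 1 := Ring.inverse_mul_cancel B hu
  calc Ring.inverse B = Ring.inverse B * (P * B) := by rw [P_mul_B, mul_one]
    _ = P * (Ring.inverse B * B) := by ring
    _ = P := by rw [h2, mul_one]

theorem coeff_A (p : ℕ) (hp : 1 ≤ p) (j : ℕ) (hj : j < p) :
    coeff j (∏' m : ℕ+, (1 - (X : PowerSeries ℤ) ^ (p * (m : ℕ))) ^ p) =
      if j = 0 then 1 else 0 := by
  set f : ℕ+ → PowerSeries ℤ := fun m => (1 - (X : PowerSeries ℤ) ^ (p * (m : ℕ))) ^ p with hf_def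
  have hbase : ∀ (m : ℕ+) (k : ℕ), k ≤ p * (m : ℕ) →
      (X : PowerSeries ℤ) ^ k ∣ (1 - (X : PowerSeries ℤ) ^ (p * (m : ℕ))) - 1 := by
    intro m k hk
    have : (1 - (X : PowerSeries ℤ) ^ (p * (m : ℕ))) - 1 = -(X ^ (p * (m : ℕ))) := by ring
    rw [this]
    exact (pow_dvd_pow (X : PowerSeries ℤ) hk).neg_right
  have hf : ∀ m : ℕ+, (X : PowerSeries ℤ) ^ (m : ℕ) ∣ f m - 1 := by
    intro m
    exact dvd_pow_sub_one (hbase m (m : ℕ) (Nat.le_mul_of_pos_left _ hp)) p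
  rw [coeff_tprod f hf j]
  have hdvd : (X : PowerSeries ℤ) ^ p ∣
      (∏ m ∈ Finset.Iic (⟨j + 1, j.succ_pos⟩ : ℕ+), f m) - 1 := by
    refine dvd_prod_sub_one fun m _ => ?_
    exact dvd_pow_sub_one (hbase m p (Nat.le_mul_of_pos_right _ m.2)) p
  have h0 : coeff j ((∏ m ∈ Finset.Iic (⟨j + 1, j.succ_pos⟩ : ℕ+), f m) - 1) = 0 :=
    X_pow_dvd_iff.1 hdvd j hj
  rw [map_sub] at h0
  have : coeff j (∏ m ∈ Finset.Iic (⟨j + 1, j.succ_pos⟩ : ℕ+), f m) = coeff j 1 := by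
    linarith
  rw [this, coeff_one]

end

end EtaAux

/-- For a prime `p` and `0 ≤ d < p`, the coefficient of `X^d` in `G_p` is the number of
partitions of `d`; in particular it is positive.  Consequently, for a prime `p ≥ 11`
the coefficients `c(n)` of `η(pτ)^p/η(τ)` vanish for `1 ≤ n < (p²−1)/24` and are
nonzero for `(p²−1)/24 ≤ n < (p²−1)/24 + p`. -/
theorem coeff_G_eq_partition_count (p : ℕ) (hp : p.Prime) :
    (∀ d : ℕ, d < p →
      PowerSeries.coeff d (G p) = Fintype.card (Nat.Partition d) ∧
      0 < PowerSeries.coeff d (G p)) ∧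
    (11 ≤ p →
      (∀ n : ℕ, 1 ≤ n → n < (p ^ 2 - 1) / 24 → c p n = 0) ∧
      (∀ n : ℕ, (p ^ 2 - 1) / 24 ≤ n → n < (p ^ 2 - 1) / 24 + p → c p n ≠ 0)) := by
  have part1 : ∀ d : ℕ, d < p →
      PowerSeries.coeff d (G p) = Fintype.card (Nat.Partition d) := by
    intro d hd
    rw [G, EtaAux.inverse_B_eq_P]
    have key := EtaAux.coeff_mul_congr (n := d)
      (a := ∏' m : ℕ+, (1 - (X : PowerSeries ℤ) ^ (p * (m : ℕ))) ^ p) (a' := 1)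
      (b := EtaAux.P) (b' := EtaAux.P)
      (fun j hj => by
        rw [EtaAux.coeff_A p hp.one_lt.le j (lt_of_le_of_lt hj hd), coeff_one])
      (fun _ _ => rfl)
    rw [key, one_mul, EtaAux.P, coeff_mk]
  have hpos : ∀ d : ℕ, d < p → 0 < PowerSeries.coeff d (G p) := by
    intro d hd
    rw [part1 d hd]
    haveI : Nonempty (Nat.Partition d) := ⟨Nat.Partition.indiscrete d⟩
    exact_mod_cast Fintype.card_pos
  refine ⟨fun d hd => ⟨part1 d hd, hpos d hd⟩, fun _ => ⟨?_, ?_⟩⟩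
  · intro n h1 h2
    unfold c
    rw [mul_comm, coeff_mul_X_pow', if_neg (by omega)]
  · intro n h1 h2
    unfold c
    rw [mul_comm, coeff_mul_X_pow', if_pos h1]
    exact (hpos (n - (p ^ 2 - 1) / 24) (by omega)).ne'
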